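/- arXiv:1904.06227 — 10 statements merged into one kernel-verified Lean document; each statement's English description precedes it below -/
import Mathlib

section
/- Inclusion logic formulas are closed under unions of teams: if M ⊨_{X_i} φ for all i ∈ I, then M ⊨_{⋃_{i∈I} X_i} φ. -/
namespace TeamSem

variable {M : Type}

/-- A team is a set of assignments (variables are natural numbers). -/
abbrev Team (M : Type) := Set (ℕ → M)

/-- Lax existential extension of a team `X` along variable `x` by a choice function `F`. -/
def extT (X : Team M) (x : ℕ) (F : (ℕ → M) → Set M) : Team M :=
  {t | ∃ s ∈ X, ∃ a ∈ F s, t = Function.update s x a}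

/-- Universal extension of a team `X` along variable `x`. -/
def extAll (X : Team M) (x : ℕ) : Team M :=
  {t | ∃ s ∈ X, ∃ a : M, t = Function.update s x a}

/-- First-order formulas with semantic atoms depending on a finite list of variables. -/
inductive FOForm (M : Type) where
  | atom : List ℕ → (List M → Prop) → FOForm M
  | neg  : FOForm M → FOForm M
  | and  : FOForm M → FOForm M → FOForm M
  | or   : FOForm M → FOForm M → FOForm M
  | ex   : ℕ → FOForm M → FOForm M
  | all  : ℕ → FOForm M → FOForm M

/-- Tarskian (single-assignment) satisfaction for first-order formulas. -/
def FOForm.sat : FOForm M → (ℕ → M) → Prop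
  | .atom l p, s => p (l.map s)
  | .neg φ, s => ¬ FOForm.sat φ s
  | .and φ ψ, s => FOForm.sat φ s ∧ FOForm.sat ψ s
  | .or φ ψ, s => FOForm.sat φ s ∨ FOForm.sat ψ s
  | .ex x φ, s => ∃ a : M, FOForm.sat φ (Function.update s x a)
  | .all x φ, s => ∀ a : M, FOForm.sat φ (Function.update s x a)

/-- Free variables of a first-order formula. -/
def FOForm.fv : FOForm M → Set ℕ
  | .atom l _ => {v | v ∈ l}
  | .neg φ => FOForm.fv φ
  | .and φ ψ => FOForm.fv φ ∪ FOForm.fv ψ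
  | .or φ ψ => FOForm.fv φ ∪ FOForm.fv ψ
  | .ex x φ => FOForm.fv φ \ {x}
  | .all x φ => FOForm.fv φ \ {x}

/-- Formulas of inclusion logic: first-order formulas (with negation applied
only to first-order formulas), inclusion atoms, ∧, ∨, ∃, ∀. -/
inductive IncForm (M : Type) where
  | fo   : FOForm M → IncForm M
  | incl : List ℕ → List ℕ → IncForm M
  | and  : IncForm M → IncForm M → IncForm M
  | or   : IncForm M → IncForm M → IncForm M
  | ex   : ℕ → IncForm M → IncForm M
  | all  : ℕ → IncForm M → IncForm M

/-- Lax team semantics for inclusion logic. -/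
def IncForm.tsat : IncForm M → Team M → Prop
  | .fo α, X => ∀ s ∈ X, FOForm.sat α s
  | .incl xs ys, X => ∀ s ∈ X, ∃ s' ∈ X, xs.map s = ys.map s'
  | .and φ ψ, X => IncForm.tsat φ X ∧ IncForm.tsat ψ X
  | .or φ ψ, X => ∃ Y Z : Team M, X = Y ∪ Z ∧ IncForm.tsat φ Y ∧ IncForm.tsat ψ Z
  | .ex x φ, X => ∃ F : (ℕ → M) → Set M, (∀ s ∈ X, (F s).Nonempty) ∧
      IncForm.tsat φ (extT X x F)
  | .all x φ, X => IncForm.tsat φ (extAll X x)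

/-- Free variables of an inclusion logic formula. -/
def IncForm.fv : IncForm M → Set ℕ
  | .fo α => FOForm.fv α
  | .incl xs ys => {v | v ∈ xs ∨ v ∈ ys}
  | .and φ ψ => IncForm.fv φ ∪ IncForm.fv ψ
  | .or φ ψ => IncForm.fv φ ∪ IncForm.fv ψ
  | .ex x φ => IncForm.fv φ \ {x}
  | .all x φ => IncForm.fv φ \ {x}

/-- A block of existential quantifiers. -/
def IncForm.exs (l : List ℕ) (φ : IncForm M) : IncForm M := l.foldr IncForm.ex φ

/-- A block of universal quantifiers. -/
def IncForm.alls (l : List ℕ) (φ : IncForm M) : IncForm M := l.foldr IncForm.all φ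

/-- inclusion logic formulas are closed under unions of teams. -/
theorem union_closure {ι : Type} (φ : IncForm M) (X : ι → Team M)
    (h : ∀ i, IncForm.tsat φ (X i)) :
    IncForm.tsat φ (⋃ i, X i) := by
  induction φ generalizing ι X with
  | fo α =>
    intro s hs
    obtain ⟨_, ⟨i, rfl⟩, hi⟩ := hs
    exact h i s hi
  | incl xs ys =>
    intro s hs
    obtain ⟨_, ⟨i, rfl⟩, hi⟩ := hs
    obtain ⟨s', hs', heq⟩ := h i s hi
    exact ⟨s', Set.mem_iUnion.2 ⟨i, hs'⟩, heq⟩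
  | and φ ψ ihφ ihψ =>
    exact ⟨ihφ X (fun i => (h i).1), ihψ X (fun i => (h i).2)⟩
  | or φ ψ ihφ ihψ =>
    choose Y Z hXYZ hY hZ using h
    refine ⟨⋃ i, Y i, ⋃ i, Z i, ?_, ihφ Y hY, ihψ Z hZ⟩
    rw [← Set.iUnion_union_distrib]
    exact Set.iUnion_congr hXYZ
  | ex x φ ih =>
    choose F hFne hFsat using h
    refine ⟨fun s => ⋃ i, {a | s ∈ X i ∧ a ∈ F i s}, ?_, ?_⟩
    · intro s hs
      obtain ⟨_, ⟨i, rfl⟩, hi⟩ := hs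
      obtain ⟨a, ha⟩ := hFne i s hi
      exact ⟨a, Set.mem_iUnion.2 ⟨i, hi, ha⟩⟩
    · have hE : extT (⋃ i, X i) x (fun s => ⋃ i, {a | s ∈ X i ∧ a ∈ F i s})
          = ⋃ i, extT (X i) x (F i) := by
        ext t
        constructor
        · rintro ⟨s, _, a, haU, rfl⟩
          obtain ⟨_, ⟨i, rfl⟩, hsi, hai⟩ := haU
          exact Set.mem_iUnion.2 ⟨i, s, hsi, a, hai, rfl⟩
        · rintro ⟨_, ⟨i, rfl⟩, s, hsi, a, hai, rfl⟩
          exact ⟨s, Set.mem_iUnion.2 ⟨i, hsi⟩, a,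
            Set.mem_iUnion.2 ⟨i, hsi, hai⟩, rfl⟩
      rw [hE]
      exact ih _ hFsat
  | all x φ ih =>
    show IncForm.tsat φ _
    have hE : extAll (⋃ i, X i) x = ⋃ i, extAll (X i) x := by
      ext t
      constructor
      · rintro ⟨s, hsU, a, rfl⟩
        obtain ⟨_, ⟨i, rfl⟩, hi⟩ := hsU
        exact Set.mem_iUnion.2 ⟨i, s, hi, a, rfl⟩
      · rintro ⟨_, ⟨i, rfl⟩, s, hi, a, rfl⟩
        exact ⟨s, Set.mem_iUnion.2 ⟨i, hi⟩, a, rfl⟩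
    rw [hE]
    exact ih _ h

end TeamSem
end

section
/- Inclusion logic satisfies the locality property: if X and Y are teams of M whose restrictions to the free variables of φ coincide, i.e., X↾Fv(φ) = Y↾Fv(φ), then M ⊨_X φ if and only if M ⊨_Y φ. -/
namespace TeamSem

variable {M : Type}

/-- The restriction `X ↾ V` of a team to a set of variables. -/
def restrictTeam (X : Team M) (V : Set ℕ) : Set (V → M) :=
  (fun s => fun v : V => s v.1) '' X

def Agree (V : Set ℕ) (X Y : Team M) : Prop :=
  ∀ s ∈ X, ∃ t ∈ Y, Set.EqOn s t V

lemma Agree.mono' {V W : Set ℕ} {X Y : Team M} (h : Agree V X Y) (hw : W ⊆ V) :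
    Agree W X Y := fun s hs => by
  obtain ⟨t, ht, he⟩ := h s hs
  exact ⟨t, ht, he.mono hw⟩

lemma restrict_eq_iff {V : Set ℕ} {X Y : Team M} :
    restrictTeam X V = restrictTeam Y V ↔ Agree V X Y ∧ Agree V Y X := by
  constructor
  · intro h
    constructor
    · intro s hs
      have hm : (fun v : V => s v.1) ∈ restrictTeam Y V := h ▸ ⟨s, hs, rfl⟩
      obtain ⟨t, ht, he⟩ := hm
      exact ⟨t, ht, fun v hv => (congrFun he ⟨v, hv⟩).symm⟩
    · intro t ht
      have hm : (fun v : V => t v.1) ∈ restrictTeam X V := h.symm ▸ ⟨t, ht, rfl⟩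
      obtain ⟨s, hs, he⟩ := hm
      exact ⟨s, hs, fun v hv => (congrFun he ⟨v, hv⟩).symm⟩
  · rintro ⟨h1, h2⟩
    ext f
    constructor
    · rintro ⟨s, hs, rfl⟩
      obtain ⟨t, ht, he⟩ := h1 s hs
      exact ⟨t, ht, by funext v; exact (he v.2).symm⟩
    · rintro ⟨t, ht, rfl⟩
      obtain ⟨s, hs, he⟩ := h2 t ht
      exact ⟨s, hs, by funext v; exact (he v.2).symm⟩

lemma eqOn_update {s t : ℕ → M} {V : Set ℕ} {x : ℕ} {a : M}
    (h : Set.EqOn s t (V \ {x})) :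
    Set.EqOn (Function.update s x a) (Function.update t x a) V := by
  intro v hv
  by_cases hvx : v = x
  · subst hvx; simp
  · simp only [Function.update_of_ne hvx]
    exact h ⟨hv, hvx⟩

lemma FOForm.sat_congr (α : FOForm M) :
    ∀ {s t : ℕ → M}, Set.EqOn s t α.fv → (α.sat s ↔ α.sat t) := by
  induction α with
  | atom l p =>
    intro s t h
    have : l.map s = l.map t := List.map_congr_left (fun a ha => h ha)
    simp [FOForm.sat, this]
  | neg φ ih =>
    intro s t h
    simp only [FOForm.sat]
    exact not_congr (ih h)
  | and φ ψ ih1 ih2 =>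
    intro s t h
    simp only [FOForm.sat]
    exact and_congr (ih1 (h.mono Set.subset_union_left))
      (ih2 (h.mono Set.subset_union_right))
  | or φ ψ ih1 ih2 =>
    intro s t h
    simp only [FOForm.sat]
    exact or_congr (ih1 (h.mono Set.subset_union_left))
      (ih2 (h.mono Set.subset_union_right))
  | ex x φ ih =>
    intro s t h
    simp only [FOForm.sat]
    exact exists_congr fun a => ih (eqOn_update h)
  | all x φ ih =>
    intro s t h
    simp only [FOForm.sat]
    exact forall_congr' fun a => ih (eqOn_update h)

lemma tsat_of_agree (φ : IncForm M) :
    ∀ X Y : Team M, Agree φ.fv X Y → Agree φ.fv Y X → φ.tsat X → φ.tsat Y := by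
  induction φ with
  | fo α =>
    intro X Y _ hYX hsat t ht
    obtain ⟨s, hs, he⟩ := hYX t ht
    exact (α.sat_congr he).mpr (hsat s hs)
  | incl xs ys =>
    intro X Y hXY hYX hsat t ht
    obtain ⟨s, hs, he⟩ := hYX t ht
    obtain ⟨s', hs', heq⟩ := hsat s hs
    obtain ⟨t', ht', he'⟩ := hXY s' hs'
    refine ⟨t', ht', ?_⟩
    have h1 : xs.map t = xs.map s :=
      List.map_congr_left fun a ha => he (Or.inl ha)
    have h2 : ys.map s' = ys.map t' :=
      List.map_congr_left fun a ha => he' (Or.inr ha)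
    rw [h1, heq, h2]
  | and φ ψ ih1 ih2 =>
    intro X Y hXY hYX hsat
    exact ⟨ih1 X Y (hXY.mono' Set.subset_union_left) (hYX.mono' Set.subset_union_left) hsat.1,
      ih2 X Y (hXY.mono' Set.subset_union_right) (hYX.mono' Set.subset_union_right) hsat.2⟩
  | or φ ψ ih1 ih2 =>
    intro X Y hXY hYX hsat
    obtain ⟨Y1, Y2, hX, t1, t2⟩ := hsat
    refine ⟨{t ∈ Y | ∃ s ∈ Y1, Set.EqOn s t φ.fv},
            {t ∈ Y | ∃ s ∈ Y2, Set.EqOn s t ψ.fv}, ?_, ?_, ?_⟩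
    · apply Set.Subset.antisymm
      · intro t ht
        obtain ⟨s, hs, he⟩ := hYX t ht
        rw [hX] at hs
        cases hs with
        | inl hs => exact Or.inl ⟨ht, s, hs, fun v hv => (he (Or.inl hv)).symm⟩
        | inr hs => exact Or.inr ⟨ht, s, hs, fun v hv => (he (Or.inr hv)).symm⟩
      · rintro t (⟨ht, _⟩ | ⟨ht, _⟩) <;> exact ht
    · refine ih1 Y1 _ ?_ ?_ t1
      · intro s hs
        obtain ⟨t, ht, he⟩ := hXY s (hX ▸ Or.inl hs)
        exact ⟨t, ⟨ht, s, hs, fun v hv => he (Or.inl hv)⟩, fun v hv => he (Or.inl hv)⟩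
      · rintro t ⟨_, s, hs, he⟩
        exact ⟨s, hs, fun v hv => (he hv).symm⟩
    · refine ih2 Y2 _ ?_ ?_ t2
      · intro s hs
        obtain ⟨t, ht, he⟩ := hXY s (hX ▸ Or.inr hs)
        exact ⟨t, ⟨ht, s, hs, fun v hv => he (Or.inr hv)⟩, fun v hv => he (Or.inr hv)⟩
      · rintro t ⟨_, s, hs, he⟩
        exact ⟨s, hs, fun v hv => (he hv).symm⟩
  | ex x φ ih =>
    intro X Y hXY hYX hsat
    obtain ⟨F, hF, hφ⟩ := hsat
    refine ⟨fun t => {a | ∃ s ∈ X, Set.EqOn s t (φ.fv \ {x}) ∧ a ∈ F s}, ?_, ?_⟩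
    · intro t ht
      obtain ⟨s, hs, he⟩ := hYX t ht
      obtain ⟨a, ha⟩ := hF s hs
      exact ⟨a, s, hs, fun v hv => (he hv).symm, ha⟩
    · refine ih _ _ ?_ ?_ hφ
      · rintro u ⟨s, hs, a, ha, rfl⟩
        obtain ⟨t, ht, he⟩ := hXY s hs
        exact ⟨Function.update t x a, ⟨t, ht, a, ⟨s, hs, he, ha⟩, rfl⟩, eqOn_update he⟩
      · rintro u ⟨t, ht, a, ⟨s, hs, he, ha⟩, rfl⟩
        exact ⟨Function.update s x a, ⟨s, hs, a, ha, rfl⟩,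
          (eqOn_update he).symm⟩
  | all x φ ih =>
    intro X Y hXY hYX hsat
    refine ih _ _ ?_ ?_ hsat
    · rintro u ⟨s, hs, a, rfl⟩
      obtain ⟨t, ht, he⟩ := hXY s hs
      exact ⟨Function.update t x a, ⟨t, ht, a, rfl⟩, eqOn_update he⟩
    · rintro u ⟨t, ht, a, rfl⟩
      obtain ⟨s, hs, he⟩ := hYX t ht
      exact ⟨Function.update s x a, ⟨s, hs, a, rfl⟩, eqOn_update he⟩

/-- locality of inclusion logic. -/
theorem locality (φ : IncForm M) (X Y : Team M)
    (h : restrictTeam X (IncForm.fv φ) = restrictTeam Y (IncForm.fv φ)) :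
    IncForm.tsat φ X ↔ IncForm.tsat φ Y := by
  rw [restrict_eq_iff] at h
  exact ⟨tsat_of_agree φ X Y h.1 h.2, tsat_of_agree φ Y X h.2 h.1⟩

end TeamSem
end

section
/- The inclusion compression rule is sound: if M ⊨_X 𝗒 ⊆ 𝗑 and M ⊨_X α(𝗑/𝗓), where α(𝗑/𝗓) is a first-order formula all of whose free variables are among 𝗑, then M ⊨_X α(𝗒/𝗓). -/
namespace TeamSem

variable {M : Type}

/-- Team semantics of the inclusion atom for finite sequences of variables. -/
def inclSatF {n : ℕ} (X : Team M) (xs ys : Fin n → ℕ) : Prop :=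
  ∀ s ∈ X, ∃ s' ∈ X, ∀ j, s (xs j) = s' (ys j)

/-- soundness of the inclusion compression rule. A first-order
formula `α(𝗑/𝗓)` whose free variables are among `𝗑` is rendered semantically as
a predicate `p` on the tuple of values of `𝗑`; `α(𝗒/𝗑)` is then `p` applied to
the values of `𝗒`. -/
theorem incl_compression {n : ℕ} (X : Team M) (x y : Fin n → ℕ)
    (p : (Fin n → M) → Prop)
    (hincl : inclSatF X y x)
    (hα : ∀ s ∈ X, p (fun i => s (x i))) :
    ∀ s ∈ X, p (fun i => s (y i)) := by
  intro s hs
  obtain ⟨s', hs', h⟩ := hincl s hs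
  have := hα s' hs'
  simpa [funext_iff, h] using this

end TeamSem
end

section
/- The weakening rule via existential quantifier for inclusion atoms is sound: if M ⊨_X 𝗑 ⊆ 𝗒, then M ⊨_X ∃w(𝗑w ⊆ 𝗒z), for any variable z and any variable w not among 𝗑, 𝗒, z. -/
namespace TeamSem

variable {M : Type}

/-- Team semantics of the inclusion atom `xs ⊆ ys`. -/
def inclSat (X : Team M) (xs ys : List ℕ) : Prop :=
  ∀ s ∈ X, ∃ s' ∈ X, xs.map s = ys.map s'

lemma map_update_of_notMem (s : ℕ → M) (w : ℕ) (a : M) (l : List ℕ) (hw : w ∉ l) :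
    l.map (Function.update s w a) = l.map s := by
  apply List.map_congr_left
  intro v hv
  have : v ≠ w := fun e => hw (e ▸ hv)
  exact Function.update_of_ne this a s

/-- soundness of the weakening rule via existential quantifier:
from `𝗑 ⊆ 𝗒` infer `∃w(𝗑w ⊆ 𝗒z)` for fresh `w`. -/
theorem incl_weakening_ex (X : Team M) (x y : List ℕ) (z w : ℕ)
    (hlen : x.length = y.length)
    (hwx : w ∉ x) (hwy : w ∉ y) (hwz : w ≠ z)
    (h : inclSat X x y) :
    ∃ F : (ℕ → M) → Set M, (∀ s ∈ X, (F s).Nonempty) ∧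
      inclSat (extT X w F) (x ++ [w]) (y ++ [z]) := by
  refine ⟨fun s => {a | ∃ s' ∈ X, x.map s = y.map s' ∧ a = s' z}, ?_, ?_⟩
  · intro s hs
    obtain ⟨s', hs', hmap⟩ := h s hs
    exact ⟨s' z, s', hs', hmap, rfl⟩
  · rintro t ⟨s, hs, a, ⟨s', hs', hmap, rfl⟩, rfl⟩
    obtain ⟨b, hb⟩ : (({a | ∃ s'' ∈ X, x.map s' = y.map s'' ∧ a = s'' z} : Set M)).Nonempty := by
      obtain ⟨s'', hs'', hmap'⟩ := h s' hs'
      exact ⟨s'' z, s'', hs'', hmap', rfl⟩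
    refine ⟨Function.update s' w b, ⟨s', hs', b, hb, rfl⟩, ?_⟩
    simp only [List.map_append, List.map_cons, List.map_nil]
    rw [map_update_of_notMem s w (s' z) x hwx, map_update_of_notMem s' w b y hwy,
      Function.update_self, Function.update_of_ne hwz.symm, hmap]

end TeamSem
end

section
/- The weakening rule via universal quantifier for inclusion atoms is sound: if M ⊨_X 𝗑 ⊆ 𝗒, then M ⊨_X ∀w(𝗑z ⊆ 𝗒w), for any variable z and any variable w not among 𝗑, 𝗒, z and not in the domain of X. -/
namespace TeamSem

variable {M : Type}

/-- soundness of the weakening rule via universal quantifier: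
from `𝗑 ⊆ 𝗒` infer `∀w(𝗑z ⊆ 𝗒w)` for `w` not among `𝗑, 𝗒, z`. -/
theorem incl_weakening_all (X : Team M) (x y : List ℕ) (z w : ℕ)
    (hlen : x.length = y.length)
    (hwx : w ∉ x) (hwy : w ∉ y) (hwz : w ≠ z)
    (h : inclSat X x y) :
    inclSat (extAll X w) (x ++ [z]) (y ++ [w]) := by
  rintro t ⟨s, hs, a, rfl⟩
  obtain ⟨s'', hs'', heq⟩ := h s hs
  refine ⟨Function.update s'' w (Function.update s w a z), ⟨s'', hs'', _, rfl⟩, ?_⟩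
  have hx : x.map (Function.update s w a) = x.map s :=
    List.map_congr_left (fun v hv => Function.update_of_ne (by rintro rfl; exact hwx hv) _ _)
  have hy : y.map (Function.update s'' w (Function.update s w a z)) = y.map s'' :=
    List.map_congr_left (fun v hv => Function.update_of_ne (by rintro rfl; exact hwy hv) _ _)
  simp only [List.map_append, List.map_cons, List.map_nil, hx, hy, heq,
    Function.update_self]

end TeamSem
end

section
/- The simulation of universal quantifiers by existential quantifiers and inclusion atoms is sound: for a team X with domain exactly the variables 𝗓 and fresh variables 𝗒, M ⊨_X ∀𝗑 φ(𝗑,𝗓) if and only if M ⊨_X ∃𝗑 ∀𝗒 (𝗓𝗒 ⊆ 𝗓𝗑 ∧ φ(𝗑,𝗓)). -/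
namespace TeamSem

variable {M : Type}

/- ## Auxiliary machinery -/

/-- Two assignments agreeing outside a set `V` of variables. -/
def agreeOff (V : Set ℕ) (s t : ℕ → M) : Prop := ∀ v, v ∉ V → s v = t v

lemma agreeOff.symm' {V : Set ℕ} {s t : ℕ → M} (h : agreeOff V s t) : agreeOff V t s :=
  fun v hv => (h v hv).symm

/-- Two teams that are "equal up to scrambling the variables in `V`". -/
def Rel (V : Set ℕ) (X Y : Team M) : Prop :=
  (∀ s ∈ X, ∃ t ∈ Y, agreeOff V s t) ∧ (∀ t ∈ Y, ∃ s ∈ X, agreeOff V t s)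

lemma Rel.symm' {V : Set ℕ} {X Y : Team M} (h : Rel V X Y) : Rel V Y X :=
  ⟨h.2, h.1⟩

lemma map_congr' {f g : ℕ → M} : ∀ {l : List ℕ}, (∀ v ∈ l, f v = g v) → l.map f = l.map g := by
  intro l
  induction l with
  | nil => intro _; rfl
  | cons a l ih =>
    intro h
    simp only [List.map_cons]
    rw [h a (List.mem_cons_self), ih fun v hv => h v (List.mem_cons_of_mem _ hv)]

lemma map_eq_forall {f g : ℕ → M} : ∀ {l : List ℕ}, l.map f = l.map g → ∀ v ∈ l, f v = g v := by
  intro l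
  induction l with
  | nil => simp
  | cons a l ih =>
    intro h v hv
    simp only [List.map_cons, List.cons.injEq] at h
    rcases List.mem_cons.mp hv with rfl | hv
    · exact h.1
    · exact ih h.2 v hv

/-- Single-assignment locality for first-order formulas. -/
lemma fo_sat_congr (α : FOForm M) : ∀ s t : ℕ → M, (∀ v ∈ FOForm.fv α, s v = t v) →
    (FOForm.sat α s ↔ FOForm.sat α t) := by
  induction α with
  | atom l p =>
    intro s t h
    have : l.map s = l.map t := map_congr' fun v hv => h v hv
    simp [FOForm.sat, this]
  | neg φ ih =>
    intro s t h
    exact not_congr (ih s t h)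
  | and φ ψ ih1 ih2 =>
    intro s t h
    exact and_congr (ih1 s t fun v hv => h v (Or.inl hv)) (ih2 s t fun v hv => h v (Or.inr hv))
  | or φ ψ ih1 ih2 =>
    intro s t h
    exact or_congr (ih1 s t fun v hv => h v (Or.inl hv)) (ih2 s t fun v hv => h v (Or.inr hv))
  | ex a φ ih =>
    intro s t h
    apply exists_congr
    intro b
    apply ih
    intro v hv
    by_cases hva : v = a
    · subst hva; simp
    · rw [Function.update_of_ne hva, Function.update_of_ne hva]
      exact h v ⟨hv, hva⟩
  | all a φ ih =>
    intro s t h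
    apply forall_congr'
    intro b
    apply ih
    intro v hv
    by_cases hva : v = a
    · subst hva; simp
    · rw [Function.update_of_ne hva, Function.update_of_ne hva]
      exact h v ⟨hv, hva⟩

/-- Locality for team semantics: satisfaction transfers along `Rel V` when
the free variables avoid `V`. -/
lemma tsat_rel (φ : IncForm M) : ∀ (V : Set ℕ) (X Y : Team M),
    (∀ v ∈ IncForm.fv φ, v ∉ V) → Rel V X Y →
    IncForm.tsat φ X → IncForm.tsat φ Y := by
  induction φ with
  | fo α =>
    intro V X Y hd hrel h t ht
    obtain ⟨s, hs, hag⟩ := hrel.2 t ht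
    exact (fo_sat_congr α t s fun v hv => hag v (hd v hv)).mpr (h s hs)
  | incl xs ys =>
    intro V X Y hd hrel h t ht
    obtain ⟨s, hs, hag⟩ := hrel.2 t ht
    obtain ⟨s', hs', hmap⟩ := h s hs
    obtain ⟨t', ht', hag'⟩ := hrel.1 s' hs'
    refine ⟨t', ht', ?_⟩
    have h1 : xs.map t = xs.map s := map_congr' fun v hv => hag v (hd v (Or.inl hv))
    have h2 : ys.map s' = ys.map t' := map_congr' fun v hv => hag' v (hd v (Or.inr hv))
    rw [h1, hmap, h2]
  | and φ ψ ih1 ih2 =>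
    intro V X Y hd hrel h
    exact ⟨ih1 V X Y (fun v hv => hd v (Or.inl hv)) hrel h.1,
           ih2 V X Y (fun v hv => hd v (Or.inr hv)) hrel h.2⟩
  | or φ ψ ih1 ih2 =>
    intro V X Y hd hrel h
    obtain ⟨X1, X2, hXU, h1, h2⟩ := h
    refine ⟨{t ∈ Y | ∃ s ∈ X1, agreeOff V s t}, {t ∈ Y | ∃ s ∈ X2, agreeOff V s t}, ?_, ?_, ?_⟩
    · apply Set.Subset.antisymm
      · intro t ht
        obtain ⟨s, hs, hag⟩ := hrel.2 t ht
        rw [hXU] at hs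
        rcases hs with hs | hs
        · exact Or.inl ⟨ht, s, hs, hag.symm'⟩
        · exact Or.inr ⟨ht, s, hs, hag.symm'⟩
      · intro t ht
        rcases ht with ht | ht
        · exact ht.1
        · exact ht.1
    · refine ih1 V X1 _ (fun v hv => hd v (Or.inl hv)) ⟨?_, ?_⟩ h1
      · intro s hs
        obtain ⟨t, ht, hag⟩ := hrel.1 s (by rw [hXU]; exact Or.inl hs)
        exact ⟨t, ⟨ht, s, hs, hag⟩, hag⟩
      · rintro t ⟨_, s, hs, hag⟩
        exact ⟨s, hs, hag.symm'⟩
    · refine ih2 V X2 _ (fun v hv => hd v (Or.inr hv)) ⟨?_, ?_⟩ h2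
      · intro s hs
        obtain ⟨t, ht, hag⟩ := hrel.1 s (by rw [hXU]; exact Or.inr hs)
        exact ⟨t, ⟨ht, s, hs, hag⟩, hag⟩
      · rintro t ⟨_, s, hs, hag⟩
        exact ⟨s, hs, hag.symm'⟩
  | ex a φ ih =>
    intro V X Y hd hrel h
    obtain ⟨F, hFne, hF⟩ := h
    refine ⟨fun t => {b | ∃ s ∈ X, agreeOff V s t ∧ b ∈ F s}, ?_, ?_⟩
    · intro t ht
      obtain ⟨s, hs, hag⟩ := hrel.2 t ht
      obtain ⟨b, hb⟩ := hFne s hs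
      exact ⟨b, s, hs, hag.symm', hb⟩
    · refine ih (V \ {a}) (extT X a F) _ ?_ ⟨?_, ?_⟩ hF
      · intro v hv hvV
        exact hd v ⟨hv, fun h' => hvV.2 h'⟩ hvV.1
      · rintro u ⟨s, hs, b, hb, rfl⟩
        obtain ⟨t, ht, hag⟩ := hrel.1 s hs
        refine ⟨Function.update t a b, ⟨t, ht, b, ⟨s, hs, hag, hb⟩, rfl⟩, ?_⟩
        intro v hv
        by_cases hva : v = a
        · subst hva; simp
        · rw [Function.update_of_ne hva, Function.update_of_ne hva]
          exact hag v fun h' => hv ⟨h', hva⟩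
      · rintro u ⟨t, ht, b, ⟨s, hs, hag, hb⟩, rfl⟩
        refine ⟨Function.update s a b, ⟨s, hs, b, hb, rfl⟩, ?_⟩
        intro v hv
        by_cases hva : v = a
        · subst hva; simp
        · rw [Function.update_of_ne hva, Function.update_of_ne hva]
          exact (hag v fun h' => hv ⟨h', hva⟩).symm
  | all a φ ih =>
    intro V X Y hd hrel h
    refine ih (V \ {a}) (extAll X a) _ ?_ ⟨?_, ?_⟩ h
    · intro v hv hvV
      exact hd v ⟨hv, fun h' => hvV.2 h'⟩ hvV.1
    · rintro u ⟨s, hs, b, rfl⟩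
      obtain ⟨t, ht, hag⟩ := hrel.1 s hs
      refine ⟨Function.update t a b, ⟨t, ht, b, rfl⟩, ?_⟩
      intro v hv
      by_cases hva : v = a
      · subst hva; simp
      · rw [Function.update_of_ne hva, Function.update_of_ne hva]
        exact hag v fun h' => hv ⟨h', hva⟩
    · rintro u ⟨t, ht, b, rfl⟩
      obtain ⟨s, hs, hag⟩ := hrel.2 t ht
      refine ⟨Function.update s a b, ⟨s, hs, b, rfl⟩, ?_⟩
      intro v hv
      by_cases hva : v = a
      · subst hva; simp
      · rw [Function.update_of_ne hva, Function.update_of_ne hva]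
        exact hag v fun h' => hv ⟨h', hva⟩

/-- Override `s` on the variables in `l` by `g`. -/
def ov (s g : ℕ → M) (l : List ℕ) : ℕ → M := fun v => if v ∈ l then g v else s v

lemma ov_mem (g : ℕ → M) : ∀ (l : List ℕ) (X : Team M) (s : ℕ → M), s ∈ X →
    ov s g l ∈ l.foldl extAll X := by
  intro l
  induction l with
  | nil =>
    intro X s hs
    have : ov s g [] = s := funext fun v => by simp [ov]
    simpa [this] using hs
  | cons a l ih =>
    intro X s hs
    have h1 : Function.update s a (g a) ∈ extAll X a := ⟨s, hs, g a, rfl⟩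
    have h2 : ov s g (a :: l) = ov (Function.update s a (g a)) g l := by
      funext v
      by_cases hvl : v ∈ l
      · simp [ov, hvl]
      · by_cases hva : v = a
        · subst hva; simp [ov, hvl]
        · simp [ov, hvl, hva, Function.update_of_ne hva]
    rw [List.foldl_cons, h2]
    exact ih _ _ h1

lemma foldl_agree : ∀ (l : List ℕ) (X : Team M) (t : ℕ → M),
    t ∈ l.foldl extAll X → ∃ s ∈ X, ∀ v, v ∉ l → t v = s v := by
  intro l
  induction l with
  | nil => intro X t ht; exact ⟨t, ht, fun v _ => rfl⟩
  | cons a l ih =>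
    intro X t ht
    obtain ⟨s', hs', hag⟩ := ih (extAll X a) t ht
    obtain ⟨s, hs, b, hb⟩ := hs'
    refine ⟨s, hs, fun v hv => ?_⟩
    have hvl : v ∉ l := fun h => hv (List.mem_cons_of_mem _ h)
    have hva : v ≠ a := fun h => hv (h ▸ List.mem_cons_self)
    rw [hag v hvl, hb, Function.update_of_ne hva]

lemma subset_foldl (l : List ℕ) (X : Team M) : X ⊆ l.foldl extAll X := by
  intro s hs
  have : ov s s l = s := funext fun v => by simp [ov]
  simpa [this] using ov_mem s l X s hs

lemma tsat_alls (φ : IncForm M) : ∀ (l : List ℕ) (X : Team M),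
    IncForm.tsat (IncForm.alls l φ) X ↔ IncForm.tsat φ (l.foldl extAll X) := by
  intro l
  induction l with
  | nil => intro X; exact Iff.rfl
  | cons a l ih => intro X; exact ih (extAll X a)

lemma exs_intro (ψ : IncForm M) : ∀ (l : List ℕ) (X : Team M),
    IncForm.tsat ψ (l.foldl extAll X) → IncForm.tsat (IncForm.exs l ψ) X := by
  intro l
  induction l with
  | nil => intro X h; exact h
  | cons a l ih =>
    intro X h
    refine ⟨fun _ => Set.univ, fun s _ => ⟨s 0, trivial⟩, ?_⟩
    have he : extT X a (fun _ => Set.univ) = extAll X a := by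
      ext t; simp [extT, extAll]
    rw [he]
    exact ih (extAll X a) h

lemma exs_elim (ψ : IncForm M) : ∀ (l : List ℕ) (X : Team M),
    IncForm.tsat (IncForm.exs l ψ) X → ∃ W : Team M, IncForm.tsat ψ W ∧
      (∀ u ∈ X, ∃ w ∈ W, ∀ v, v ∉ l → u v = w v) ∧
      (∀ w ∈ W, ∃ u ∈ X, ∀ v, v ∉ l → u v = w v) := by
  intro l
  induction l with
  | nil =>
    intro X h
    exact ⟨X, h, fun u hu => ⟨u, hu, fun _ _ => rfl⟩, fun w hw => ⟨w, hw, fun _ _ => rfl⟩⟩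
  | cons a l ih =>
    intro X h
    obtain ⟨F, hFne, hF⟩ := h
    obtain ⟨W, hW, h1, h2⟩ := ih (extT X a F) hF
    refine ⟨W, hW, ?_, ?_⟩
    · intro u hu
      obtain ⟨b, hb⟩ := hFne u hu
      obtain ⟨w, hw, hag⟩ := h1 (Function.update u a b) ⟨u, hu, b, hb, rfl⟩
      refine ⟨w, hw, fun v hv => ?_⟩
      have hvl : v ∉ l := fun h' => hv (List.mem_cons_of_mem _ h')
      have hva : v ≠ a := fun h' => hv (h' ▸ List.mem_cons_self)
      rw [← hag v hvl, Function.update_of_ne hva]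
    · intro w hw
      obtain ⟨u', hu', hag⟩ := h2 w hw
      obtain ⟨u, hu, b, hb, rfl⟩ := hu'
      refine ⟨u, hu, fun v hv => ?_⟩
      have hvl : v ∉ l := fun h' => hv (List.mem_cons_of_mem _ h')
      have hva : v ≠ a := fun h' => hv (h' ▸ List.mem_cons_self)
      rw [← hag v hvl, Function.update_of_ne hva]

/-- Given `x` without duplicates and `y` of the same length, there is a function
taking the value `s yᵢ` at `xᵢ`. -/
lemma exists_fun_map (s : ℕ → M) : ∀ (x y : List ℕ), x.Nodup → y.length = x.length →
    ∃ g : ℕ → M, x.map g = y.map s := by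
  intro x
  induction x with
  | nil =>
    intro y _ hlen
    have : y = [] := List.length_eq_zero_iff.mp hlen
    exact ⟨fun _ => s 0, by simp [this]⟩
  | cons a x ih =>
    intro y hnd hlen
    cases y with
    | nil => simp at hlen
    | cons b y =>
      obtain ⟨ha, hnd'⟩ := List.nodup_cons.mp hnd
      obtain ⟨g, hg⟩ := ih y hnd' (by simpa using hlen)
      refine ⟨Function.update g a (s b), ?_⟩
      simp only [List.map_cons, Function.update_self]
      rw [map_congr' (f := Function.update g a (s b)) (g := g)
        (fun v hv => Function.update_of_ne (fun h' => ha (by simpa [h'] using hv)) _ _), hg]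
/-- soundness of the simulation of universal quantifiers by
existential quantifiers and inclusion atoms:
`∀𝗑 φ(𝗑,𝗓) ≡ ∃𝗑 ∀𝗒 (𝗓𝗒 ⊆ 𝗓𝗑 ∧ φ(𝗑,𝗓))` for fresh `𝗒`. -/
theorem forall_simulation (φ : IncForm M) (x y z : List ℕ) (X : Team M)
    (hlen : y.length = x.length)
    (hxnd : x.Nodup) (hynd : y.Nodup)
    (hxz : ∀ v ∈ x, v ∉ z)
    (hyx : ∀ v ∈ y, v ∉ x) (hyz : ∀ v ∈ y, v ∉ z)
    (hyfv : ∀ v ∈ y, v ∉ IncForm.fv φ)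
    (hfv : IncForm.fv φ ⊆ {v | v ∈ x ∨ v ∈ z}) :
    IncForm.tsat (IncForm.alls x φ) X ↔
      IncForm.tsat (IncForm.exs x (IncForm.alls y
        (.and (.incl (z ++ y) (z ++ x)) φ))) X := by
  constructor
  · -- forward direction
    intro h
    rw [tsat_alls] at h
    set Y : Team M := x.foldl extAll X with hY
    apply exs_intro
    rw [tsat_alls]
    set Z : Team M := y.foldl extAll Y with hZ
    constructor
    · -- inclusion atom
      intro s hs
      obtain ⟨t, ht, hsy⟩ := foldl_agree y Y s hs
      obtain ⟨u, hu, htx⟩ := foldl_agree x X t ht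
      obtain ⟨g, hg⟩ := exists_fun_map s x y hxnd hlen
      refine ⟨ov u g x, subset_foldl y Y (ov_mem g x X u hu), ?_⟩
      have hzeq : z.map s = z.map (ov u g x) := by
        apply map_congr'
        intro v hv
        have hvx : v ∉ x := fun h' => hxz v h' hv
        have hvy : v ∉ y := fun h' => hyz v h' hv
        simp only [ov, if_neg hvx]
        rw [hsy v hvy, htx v hvx]
      have hxyeq : y.map s = x.map (ov u g x) := by
        rw [map_congr' (f := ov u g x) (g := g) (fun v hv => by simp [ov, hv]), hg]
      rw [List.map_append, List.map_append, hzeq, hxyeq]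
    · -- φ
      refine tsat_rel φ {v | v ∈ y} Y Z (fun v hv hvy => hyfv v hvy hv) ⟨?_, ?_⟩ h
      · intro s hs
        exact ⟨s, subset_foldl y Y hs, fun _ _ => rfl⟩
      · intro t ht
        obtain ⟨s, hs, hag⟩ := foldl_agree y Y t ht
        exact ⟨s, hs, hag⟩
  · -- backward direction
    intro h
    obtain ⟨W, hW, hXW, hWX⟩ := exs_elim _ x X h
    rw [tsat_alls] at hW ⊢
    obtain ⟨hIncl, hφ⟩ := hW
    set Z : Team M := y.foldl extAll W with hZ
    set Y : Team M := x.foldl extAll X with hY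
    refine tsat_rel φ {v | v ∉ x ∧ v ∉ z} Z Y ?_ ⟨?_, ?_⟩ hφ
    · intro v hv hvV
      rcases hfv hv with h' | h'
      · exact hvV.1 h'
      · exact hvV.2 h'
    · -- from Z to Y
      intro t ht
      obtain ⟨w, hw, hty⟩ := foldl_agree y W t ht
      obtain ⟨u, hu, huw⟩ := hWX w hw
      refine ⟨ov u t x, ov_mem t x X u hu, fun v hv => ?_⟩
      by_cases hvx : v ∈ x
      · simp [ov, hvx]
      · have hvz : v ∈ z := by
          by_contra hvz
          exact hv ⟨hvx, hvz⟩
        have hvy : v ∉ y := fun h' => hyz v h' hvz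
        simp only [ov, if_neg hvx]
        rw [hty v hvy, ← huw v hvx]
    · -- from Y to Z, via the inclusion atom
      intro s hs
      obtain ⟨u, hu, hsx⟩ := foldl_agree x X s hs
      obtain ⟨w, hw, huw⟩ := hXW u hu
      obtain ⟨g, hg⟩ := exists_fun_map s y x hynd hlen.symm
      have ht0 : ov w g y ∈ Z := ov_mem g y W w hw
      obtain ⟨t', ht', hmap⟩ := hIncl (ov w g y) ht0
      rw [List.map_append, List.map_append] at hmap
      obtain ⟨hmz, hmx⟩ := List.append_inj hmap (by simp)
      have hyx2 : y.map (ov w g y) = x.map s := by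
        rw [map_congr' (f := ov w g y) (g := g) (fun v hv => by simp [ov, hv]), hg]
      refine ⟨t', ht', fun v hv => ?_⟩
      by_cases hvx : v ∈ x
      · exact (map_eq_forall (hyx2 ▸ hmx).symm v hvx).symm
      · have hvz : v ∈ z := by
          by_contra hvz
          exact hv ⟨hvx, hvz⟩
        have hvy : v ∉ y := fun h' => hyz v h' hvz
        have h1 : ov w g y v = t' v := map_eq_forall hmz v hvz
        simp only [ov, if_neg hvy] at h1
        rw [← h1, ← huw v hvx, ← hsx v hvx]

end TeamSem
end

section
/- Over a model M in the signature of arithmetic, the inclusion logic sentence ∃x∃y(y ⊆ x ∧ y < x) is true (i.e., satisfied by the team {∅}) if and only if the relation <^M is not well-founded, i.e., M contains an infinite <-descending chain. -/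
namespace TeamSem

variable {M : Type}

/-- over a model in the signature of arithmetic (with operations
`add`, `mul`, constants `zero`, `one`, and order `lt`), the inclusion logic
sentence `∃x∃y(y ⊆ x ∧ y < x)` is true (satisfied by a singleton team, playing
the role of `{∅}`) iff `lt` is not well-founded, i.e. there is an infinite
descending chain. (Here `x` is variable `0` and `y` is variable `1`.) -/
theorem inc_sentence_iff_not_wellfounded (M : Type)
    (add mul : M → M → M) (zero one : M) (lt : M → M → Prop)
    (s₀ : ℕ → M) :
    IncForm.tsat (.ex 0 (.ex 1 (.and (.incl [1] [0])
        (.fo (.atom [1, 0] (fun l => match l with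
          | [a, b] => lt a b
          | _ => False)))))) ({s₀} : Team M) ↔
      ∃ a : ℕ → M, ∀ n, lt (a (n + 1)) (a n) := by
  simp only [IncForm.tsat, FOForm.sat, List.map]
  constructor
  · rintro ⟨F, hF, G, hG, hincl, hlt⟩
    obtain ⟨a0, ha0⟩ := hF s₀ rfl
    have hs1 : Function.update s₀ 0 a0 ∈ extT {s₀} 0 F := ⟨s₀, rfl, a0, ha0, rfl⟩
    obtain ⟨b0, hb0⟩ := hG _ hs1
    have ht0 : Function.update (Function.update s₀ 0 a0) 1 b0 ∈
        extT (extT {s₀} 0 F) 1 G := ⟨_, hs1, b0, hb0, rfl⟩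
    have step : ∀ t : {t // t ∈ extT (extT {s₀} 0 F) 1 G},
        ∃ t' : {t // t ∈ extT (extT {s₀} 0 F) 1 G}, t'.1 0 = t.1 1 := by
      rintro ⟨t, ht⟩
      obtain ⟨t', ht', he⟩ := hincl t ht
      have h : t' 0 = t 1 := by injection he.symm
      exact ⟨⟨t', ht'⟩, h⟩
    choose g hg using step
    set seq : ℕ → {t // t ∈ extT (extT {s₀} 0 F) 1 G} :=
      fun n => g^[n] ⟨_, ht0⟩ with hseq
    refine ⟨fun n => (seq n).1 0, fun n => ?_⟩
    have h1 : seq (n + 1) = g (seq n) := Function.iterate_succ_apply' g n _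
    show lt ((seq (n + 1)).1 0) ((seq n).1 0)
    rw [h1, hg (seq n)]
    exact hlt (seq n).1 (seq n).2
  · rintro ⟨a, ha⟩
    refine ⟨fun _ => Set.range a, fun s _ => ⟨a 0, 0, rfl⟩,
      fun s => {b | ∃ n, s 0 = a n ∧ b = a (n + 1)}, ?_, ?_, ?_⟩
    · rintro s ⟨u, hu, c, ⟨n, rfl⟩, rfl⟩
      exact ⟨a (n + 1), n, Function.update_self .., rfl⟩
    · rintro t ⟨s, hs, b, ⟨n, hsn, rfl⟩, rfl⟩
      obtain ⟨u, hu, c, hc, rfl⟩ := hs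
      refine ⟨Function.update (Function.update s₀ 0 (a (n + 1))) 1 (a (n + 2)),
        ⟨Function.update s₀ 0 (a (n + 1)), ⟨s₀, rfl, a (n + 1), ⟨n + 1, rfl⟩, rfl⟩,
          a (n + 2), ⟨n + 1, Function.update_self .., rfl⟩, rfl⟩, ?_⟩
      simp [Function.update_self, Function.update_of_ne]
    · rintro t ⟨s, hs, b, ⟨n, hsn, rfl⟩, rfl⟩
      have h0 : Function.update s 1 (a (n + 1)) 0 = a n := by
        rw [Function.update_of_ne (by norm_num)]; exact hsn
      have h1 : Function.update s 1 (a (n + 1)) 1 = a (n + 1) :=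
        Function.update_self ..
      simp only [h0, h1]
      exact ha n

end TeamSem
end

section
/- The monotonicity rule for anonymity atoms is sound: if M ⊨_X 𝗑𝗒 Υ 𝗓 then M ⊨_X 𝗑 Υ 𝗓𝘂, for any variable sequence 𝘂 with values in the domain of X. -/
namespace TeamSem

variable {M : Type}

/-- Team semantics of the anonymity atom `a Υ b`. -/
def anonSat (X : Team M) (a b : List ℕ) : Prop :=
  ∀ s ∈ X, ∃ s' ∈ X, a.map s = a.map s' ∧ b.map s ≠ b.map s'

/-- soundness of the monotonicity rule for anonymity atoms:
from `𝗑𝗒 Υ 𝗓` infer `𝗑 Υ 𝗓𝘂`. -/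
theorem anonymity_monotonicity (X : Team M) (x y z u : List ℕ)
    (h : anonSat X (x ++ y) z) :
    anonSat X x (z ++ u) := by
  intro s hs
  obtain ⟨s', hs', heq, hne⟩ := h s hs
  refine ⟨s', hs', ?_, ?_⟩
  · rw [List.map_append, List.map_append] at heq
    exact List.append_inj_left heq (by simp)
  · simp only [List.map_append]
    intro hc
    exact hne (List.append_inj_left hc (by simp))

end TeamSem
end

section
/- The weakening rule for anonymity atoms is sound: if M ⊨_X 𝗑𝗒 Υ 𝗓𝗒 then M ⊨_X 𝗑𝗒 Υ 𝗓. -/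
namespace TeamSem

variable {M : Type}

/-- soundness of the weakening rule for anonymity atoms:
from `𝗑𝗒 Υ 𝗓𝗒` infer `𝗑𝗒 Υ 𝗓`. -/
theorem anonymity_weakening (X : Team M) (x y z : List ℕ)
    (h : anonSat X (x ++ y) (z ++ y)) :
    anonSat X (x ++ y) z := by
  intro s hs
  obtain ⟨s', hs', hagree, hdiff⟩ := h s hs
  refine ⟨s', hs', hagree, fun hz => hdiff ?_⟩
  have hy : y.map s = y.map s' := by
    have h2 := congrArg (List.drop x.length) hagree
    rw [List.map_append, List.map_append] at h2
    rwa [← List.length_map (as := x) s, List.drop_left, List.length_map,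
      ← List.length_map (as := x) s', List.drop_left] at h2
  simp [hz, hy]

end TeamSem
end

section
/- The disjunction elimination with first-order side formulas is sound in team semantics: if Δ₀ ∪ {φ} ⊨ χ and Δ₁ ∪ {ψ} ⊨ χ where Δ₀, Δ₁ are sets of first-order formulas, φ, ψ are inclusion logic formulas, and χ is an inclusion logic formula, then Δ₀ ∪ Δ₁ ∪ {φ ∨ ψ} ⊨ χ. -/
namespace TeamSem

variable {M : Type}

/-- Team-semantic entailment: every team satisfying all of `Γ` satisfies `χ`. -/
def entails (Γ : Set (IncForm M)) (χ : IncForm M) : Prop :=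
  ∀ X : Team M, (∀ γ ∈ Γ, IncForm.tsat γ X) → IncForm.tsat χ X


theorem tsat_union (φ : IncForm M) :
    ∀ Y Z : Team M, IncForm.tsat φ Y → IncForm.tsat φ Z → IncForm.tsat φ (Y ∪ Z) := by
  induction φ with
  | fo α => intro Y Z hY hZ s hs; cases hs with
    | inl h => exact hY s h
    | inr h => exact hZ s h
  | incl xs ys =>
    intro Y Z hY hZ s hs
    cases hs with
    | inl h => obtain ⟨s', hs', he⟩ := hY s h; exact ⟨s', Or.inl hs', he⟩
    | inr h => obtain ⟨s', hs', he⟩ := hZ s h; exact ⟨s', Or.inr hs', he⟩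
  | and φ ψ ihφ ihψ =>
    intro Y Z hY hZ
    exact ⟨ihφ Y Z hY.1 hZ.1, ihψ Y Z hY.2 hZ.2⟩
  | or φ ψ ihφ ihψ =>
    intro Y Z hY hZ
    obtain ⟨A, B, rfl, hA, hB⟩ := hY
    obtain ⟨C, D, rfl, hC, hD⟩ := hZ
    exact ⟨A ∪ C, B ∪ D, by ext t; simp [Set.mem_union]; tauto,
      ihφ A C hA hC, ihψ B D hB hD⟩
  | ex x φ ih =>
    intro Y Z hY hZ
    obtain ⟨F, hFne, hF⟩ := hY
    obtain ⟨G, hGne, hG⟩ := hZ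
    refine ⟨fun s => {a | (s ∈ Y ∧ a ∈ F s) ∨ (s ∈ Z ∧ a ∈ G s)}, ?_, ?_⟩
    · rintro s (hs | hs)
      · obtain ⟨a, ha⟩ := hFne s hs
        exact ⟨a, Or.inl ⟨hs, ha⟩⟩
      · obtain ⟨a, ha⟩ := hGne s hs
        exact ⟨a, Or.inr ⟨hs, ha⟩⟩
    · have heq : extT (Y ∪ Z) x (fun s => {a | (s ∈ Y ∧ a ∈ F s) ∨ (s ∈ Z ∧ a ∈ G s)})
          = extT Y x F ∪ extT Z x G := by
        ext t
        constructor
        · rintro ⟨s, hs, a, (⟨h, ha⟩ | ⟨h, ha⟩), rfl⟩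
          · exact Or.inl ⟨s, h, a, ha, rfl⟩
          · exact Or.inr ⟨s, h, a, ha, rfl⟩
        · rintro (⟨s, hs, a, ha, rfl⟩ | ⟨s, hs, a, ha, rfl⟩)
          · exact ⟨s, Or.inl hs, a, Or.inl ⟨hs, ha⟩, rfl⟩
          · exact ⟨s, Or.inr hs, a, Or.inr ⟨hs, ha⟩, rfl⟩
      show IncForm.tsat φ _
      rw [heq]
      exact ih _ _ hF hG
  | all x φ ih =>
    intro Y Z hY hZ
    have : extAll (Y ∪ Z) x = extAll Y x ∪ extAll Z x := by
      ext t
      constructor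
      · rintro ⟨s, hs | hs, a, rfl⟩
        · exact Or.inl ⟨s, hs, a, rfl⟩
        · exact Or.inr ⟨s, hs, a, rfl⟩
      · rintro (⟨s, hs, a, rfl⟩ | ⟨s, hs, a, rfl⟩)
        · exact ⟨s, Or.inl hs, a, rfl⟩
        · exact ⟨s, Or.inr hs, a, rfl⟩
    show IncForm.tsat φ _
    rw [this]; exact ih _ _ hY hZ

/-- soundness of disjunction elimination with first-order side
formulas: if `Δ₀, φ ⊨ χ` and `Δ₁, ψ ⊨ χ` with `Δ₀, Δ₁` sets of first-order
formulas, then `Δ₀, Δ₁, φ ∨ ψ ⊨ χ`. -/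
theorem or_elimination_sound (Δ₀ Δ₁ : Set (FOForm M)) (φ ψ χ : IncForm M)
    (h0 : entails ((IncForm.fo '' Δ₀) ∪ {φ}) χ)
    (h1 : entails ((IncForm.fo '' Δ₁) ∪ {ψ}) χ) :
    entails ((IncForm.fo '' Δ₀) ∪ (IncForm.fo '' Δ₁) ∪ {.or φ ψ}) χ := by
  intro X hX
  obtain ⟨Y, Z, rfl, hY, hZ⟩ := hX (.or φ ψ) (Or.inr rfl)
  have hχY : IncForm.tsat χ Y := by
    apply h0
    rintro γ (⟨α, hα, rfl⟩ | rfl)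
    · intro s hs
      exact hX (.fo α) (Or.inl (Or.inl ⟨α, hα, rfl⟩)) s (Or.inl hs)
    · exact hY
  have hχZ : IncForm.tsat χ Z := by
    apply h1
    rintro γ (⟨α, hα, rfl⟩ | rfl)
    · intro s hs
      exact hX (.fo α) (Or.inl (Or.inr ⟨α, hα, rfl⟩)) s (Or.inr hs)
    · exact hZ
  exact tsat_union χ Y Z hχY hχZ

end TeamSem
end
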